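/- Let w₁,…,wₙ : U → ℝ be C¹ and positive on an open set U ⊆ ℝ², W := Σwᵢ, and φᵢ := wᵢ/W. Then for any indices i, j, k, D(φᵢ, φⱼ, φ_k) = D(wᵢ, wⱼ, w_k)/W³, where D(a,b,c) := det[[a,b,c],[a_x,b_x,c_x],[a_y,b_y,c_y]]. -/

import Mathlib

/-- `D(a,b,c)(x)` is the determinant of the 3×3 matrix whose rows are the function
values and the `x`- and `y`-partial derivatives at `x`. -/
noncomputable def Dfun (a b c : ℝ × ℝ → ℝ) (x : ℝ × ℝ) : ℝ :=
  Matrix.det !![a x, b x, c x;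
    fderiv ℝ a x (1, 0), fderiv ℝ b x (1, 0), fderiv ℝ c x (1, 0);
    fderiv ℝ a x (0, 1), fderiv ℝ b x (0, 1), fderiv ℝ c x (0, 1)]

lemma fderiv_div_apply' {f g : ℝ × ℝ → ℝ} {x v : ℝ × ℝ}
    (hf : DifferentiableAt ℝ f x) (hg : DifferentiableAt ℝ g x) (hgx : g x ≠ 0) :
    fderiv ℝ (fun y => f y / g y) x v
      = (fderiv ℝ f x v * g x - f x * fderiv ℝ g x v) / (g x) ^ 2 := by
  have hinv : HasFDerivAt (fun y => (g y)⁻¹)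
      ((ContinuousLinearMap.smulRight (1 : ℝ →L[ℝ] ℝ) (-((g x) ^ 2)⁻¹)).comp
        (fderiv ℝ g x)) x :=
    (hasFDerivAt_inv hgx).comp x hg.hasFDerivAt
  have hmul := (hf.hasFDerivAt.mul hinv).fderiv
  have : (fun y => f y / g y) = fun y => f y * (g y)⁻¹ := by
    funext y; rw [div_eq_mul_inv]
  rw [this, show (fun y => f y * (g y)⁻¹) = f * fun y => (g y)⁻¹ from rfl, hmul]
  simp [ContinuousLinearMap.add_apply, ContinuousLinearMap.smul_apply,
    ContinuousLinearMap.comp_apply, ContinuousLinearMap.smulRight_apply,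
    smul_eq_mul, div_eq_mul_inv]
  field_simp
  ring

/-- Normalization lemma: if `wᵢ` are positive `C¹` weights with sum `W` and
`φᵢ = wᵢ / W`, then `D(φᵢ,φⱼ,φ_k) = D(wᵢ,wⱼ,w_k) / W³`. -/
theorem stmt9 (n : ℕ) (U : Set (ℝ × ℝ)) (hU : IsOpen U) (w : Fin n → (ℝ × ℝ) → ℝ)
    (hw : ∀ i, ContDiffOn ℝ 1 (w i) U) (hpos : ∀ i, ∀ y ∈ U, 0 < w i y)
    (x : ℝ × ℝ) (hx : x ∈ U) (i j k : Fin n) :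
    Dfun (fun y => w i y / ∑ l, w l y) (fun y => w j y / ∑ l, w l y)
        (fun y => w k y / ∑ l, w l y) x =
      Dfun (w i) (w j) (w k) x / (∑ l, w l x) ^ 3 := by
  have hxU : U ∈ nhds x := hU.mem_nhds hx
  have hdiff : ∀ m, DifferentiableAt ℝ (w m) x := fun m =>
    ((hw m).contDiffAt hxU).differentiableAt one_ne_zero
  have hW : DifferentiableAt ℝ (fun y => ∑ l, w l y) x := by
    apply DifferentiableAt.fun_sum
    intro m _
    exact hdiff m
  have hWpos : 0 < ∑ l, w l x := by
    rcases Nat.eq_zero_or_pos n with h0 | h0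
    · subst h0; exact absurd i.2 (by simp)
    · exact Finset.sum_pos (fun m _ => hpos m x hx) (by
        simpa [Finset.univ_nonempty_iff] using Fin.pos_iff_nonempty.mp h0)
  have hWne : (∑ l, w l x) ≠ 0 := ne_of_gt hWpos
  have key : ∀ (m : Fin n) (v : ℝ × ℝ),
      fderiv ℝ (fun y => w m y / ∑ l, w l y) x v
        = (fderiv ℝ (w m) x v * (∑ l, w l x)
            - w m x * fderiv ℝ (fun y => ∑ l, w l y) x v) / (∑ l, w l x) ^ 2 :=
    fun m v => fderiv_div_apply' (hdiff m) hW hWne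
  simp only [Dfun, Matrix.det_fin_three, Matrix.cons_val', Matrix.cons_val_zero,
    Matrix.cons_val_one, Matrix.head_cons, Matrix.empty_val', Matrix.cons_val_fin_one,
    Matrix.head_fin_const, Matrix.of_apply, Matrix.cons_val_two, Matrix.tail_cons, key]
  field_simp
  ring
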